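/- The group X = Diag_q(S_q) ⋊ L acts transitively on Γ₁(C(S_q)), the set of neighbours of C(S_q) in H(q,q). -/

import Mathlib

/-- The permutation code `C(T) = {α(g) : g ∈ T}` in `H(q,q)`. -/
def permCode {q : ℕ} (T : Set (Equiv.Perm (Fin q))) : Set (Fin q → Fin q) :=
  {v | ∃ g ∈ T, v = fun i => g i}

/-- The set of neighbours `Γ₁(C)` of a code `C`. -/
def codeNbrs {m q : ℕ} (C : Set (Fin m → Fin q)) : Set (Fin m → Fin q) :=
  {v | v ∉ C ∧ ∃ c ∈ C, hammingDist v c = 1}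

/-- The diagonal action `x_y`: apply the alphabet permutation `y` in every coordinate. -/
def diagAct {m q : ℕ} (y : Equiv.Perm (Fin q)) (v : Fin m → Fin q) : Fin m → Fin q :=
  fun i => y (v i)

/-- The action `σ(z)` permuting coordinate positions by `z`. -/
def posAct {m q : ℕ} (z : Equiv.Perm (Fin m)) (v : Fin m → Fin q) : Fin m → Fin q :=
  fun i => v (z⁻¹ i)

/-- A neighbour of `C(S_q)` agrees with some permutation `g` everywhere except one position. -/
lemma nbr_struct {q : ℕ} {μ : Fin q → Fin q}
    (hμ : μ ∈ codeNbrs (permCode (Set.univ : Set (Equiv.Perm (Fin q))))) :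
    ∃ (g : Equiv.Perm (Fin q)) (i : Fin q), μ i ≠ g i ∧ ∀ m, m ≠ i → μ m = g m := by
  obtain ⟨-, c, ⟨g, -, rfl⟩, hd⟩ := hμ
  rw [hammingDist, Finset.card_eq_one] at hd
  obtain ⟨i, hi⟩ := hd
  refine ⟨g, i, ?_, ?_⟩
  · have : i ∈ Finset.filter (fun x => μ x ≠ g x) Finset.univ := by
      rw [hi]; exact Finset.mem_singleton_self i
    exact (Finset.mem_filter.mp this).2
  · intro m hm
    by_contra hne
    have : m ∈ Finset.filter (fun x => μ x ≠ g x) Finset.univ :=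
      Finset.mem_filter.mpr ⟨Finset.mem_univ m, hne⟩
    rw [hi, Finset.mem_singleton] at this
    exact hm this

/-- `X = Diag_q(S_q) ⋊ L` acts transitively on `Γ₁(C(S_q))` for `q ≥ 2`. -/
theorem stmt11 (q : ℕ) (hq : 2 ≤ q) :
    ∀ μ ∈ codeNbrs (permCode (Set.univ : Set (Equiv.Perm (Fin q)))),
      ∀ ν ∈ codeNbrs (permCode (Set.univ : Set (Equiv.Perm (Fin q)))),
        ∃ y z : Equiv.Perm (Fin q), posAct z (diagAct y μ) = ν := by
  intro μ hμ ν hν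
  obtain ⟨g, i, hgi, hg⟩ := nbr_struct hμ
  obtain ⟨h, p, hhk, hh⟩ := nbr_struct hν
  set j : Fin q := g⁻¹ (μ i) with hj
  set l : Fin q := h⁻¹ (ν p) with hl
  have hgj : g j = μ i := g.apply_symm_apply (μ i)
  have hhl : h l = ν p := h.apply_symm_apply (ν p)
  have hji : j ≠ i := fun e => hgi (by rw [← hgj, e])
  have hlk : l ≠ p := fun e => hhk (by rw [← hhl, e])
  set z₀ : Equiv.Perm (Fin q) := Equiv.swap i p with hz₀
  set z : Equiv.Perm (Fin q) := (Equiv.swap (z₀ j) l) * z₀ with hz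
  have hz₀i : z₀ i = p := Equiv.swap_apply_left i p
  have hzjk : z₀ j ≠ p := fun e => hji (z₀.injective (by rw [e, hz₀i]))
  have hzi : z i = p := by
    simp only [hz, Equiv.Perm.mul_apply, hz₀i]
    exact Equiv.swap_apply_of_ne_of_ne (Ne.symm hzjk) (Ne.symm hlk)
  have hzj : z j = l := by
    simp only [hz, Equiv.Perm.mul_apply]
    exact Equiv.swap_apply_left _ _
  refine ⟨h * z * g⁻¹, z, ?_⟩
  funext m
  show (h * z * g⁻¹) (μ (z⁻¹ m)) = ν m
  by_cases hm : m = p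
  · subst hm
    have : z⁻¹ m = i := by rw [← hzi, Equiv.Perm.inv_def, Equiv.symm_apply_apply]
    rw [this, ← hgj]
    simp [Equiv.Perm.mul_apply, hzj, hhl]
  · have hzm : z⁻¹ m ≠ i := by
      intro e
      exact hm (by rw [← hzi, ← e, Equiv.Perm.inv_def, Equiv.apply_symm_apply])
    rw [hg _ hzm]
    simp [Equiv.Perm.mul_apply, hh _ hm]
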